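/- Let p ∈ (0,1), let F ∈ F_1^+ be a cdf continuous at x_p := F^{-1}(p), and let F_n be the empirical cdf of independent random variables X_1, …, X_n, each with cdf F. Then ∫_p^1 F_n^{-1}(u) du converges in probability to ∫_p^1 F^{-1}(u) du as n → ∞. -/

import Mathlib

open MeasureTheory ProbabilityTheory Filter Set
open scoped Topology ENNReal

/-- The cumulative distribution function of a probability measure `μ` on `ℝ`. -/
noncomputable def cdfOf (μ : Measure ℝ) : ℝ → ℝ := fun x => (μ (Iic x)).toReal

/-- The quantile function of a cdf `F`: `F⁻¹(p) = inf {x : F x ≥ p}`. -/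
noncomputable def qtl (F : ℝ → ℝ) (p : ℝ) : ℝ := sInf {x | p ≤ F x}

/-- The empirical cdf `F_n` built from the first `n` of the random variables `X`,
at the sample point `ω`: `F_n(t) = (1/n) ∑_{i<n} 1{X_i(ω) ≤ t}`. -/
noncomputable def empCdf {Ω : Type*} (X : ℕ → Ω → ℝ) (n : ℕ) (ω : Ω) : ℝ → ℝ :=
  fun t => (∑ i ∈ Finset.range n, if X i ω ≤ t then (1 : ℝ) else 0) / n

namespace Stmt14

/-! ### Basic facts about `cdfOf` -/

variable {ν : Measure ℝ} [IsProbabilityMeasure ν] {u v x t : ℝ}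

lemma cdfOf_eq_cdf (ν : Measure ℝ) [IsProbabilityMeasure ν] : cdfOf ν = ⇑(cdf ν) :=
  funext fun x => (cdf_eq_real ν x).symm

lemma cdfOf_mono : Monotone (cdfOf ν) := by
  rw [cdfOf_eq_cdf]; exact monotone_cdf ν

lemma cdfOf_nonneg (x : ℝ) : 0 ≤ cdfOf ν x := by
  rw [cdfOf_eq_cdf]; exact cdf_nonneg ν x

lemma cdfOf_le_one (x : ℝ) : cdfOf ν x ≤ 1 := by
  rw [cdfOf_eq_cdf]; exact cdf_le_one ν x

lemma cdfOf_tendsto_atBot : Tendsto (cdfOf ν) atBot (𝓝 0) := by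
  rw [cdfOf_eq_cdf]; exact tendsto_cdf_atBot ν

lemma cdfOf_tendsto_atTop : Tendsto (cdfOf ν) atTop (𝓝 1) := by
  rw [cdfOf_eq_cdf]; exact tendsto_cdf_atTop ν

lemma cdfOf_rc (x : ℝ) : ContinuousWithinAt (cdfOf ν) (Ici x) x := by
  rw [cdfOf_eq_cdf]; exact (cdf ν).right_continuous x

lemma ofReal_cdfOf (t : ℝ) : ENNReal.ofReal (cdfOf ν t) = ν (Iic t) := by
  rw [cdfOf_eq_cdf]; exact ofReal_cdf ν t

/-! ### Basic facts about `qtl` of a cdf -/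

lemma bddBelow_qset (hu : 0 < u) : BddBelow {x | u ≤ cdfOf ν x} := by
  obtain ⟨x₀, hx₀⟩ := eventually_atBot.1 ((cdfOf_tendsto_atBot (ν := ν)).eventually_lt_const hu)
  refine ⟨x₀, fun s hs => ?_⟩
  by_contra h
  push_neg at h
  exact absurd hs (not_le.2 (hx₀ s h.le))

lemma nonempty_qset (hu : u < 1) : {x | u ≤ cdfOf ν x}.Nonempty := by
  obtain ⟨x₀, hx₀⟩ := ((cdfOf_tendsto_atTop (ν := ν)).eventually_const_lt hu).exists
  exact ⟨x₀, hx₀.le⟩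

lemma le_cdfOf_qtl (h0 : 0 < u) (h1 : u < 1) : u ≤ cdfOf ν (qtl (cdfOf ν) u) := by
  have key : ∀ x, qtl (cdfOf ν) u < x → u ≤ cdfOf ν x := by
    intro x hx
    obtain ⟨s, hs, hsx⟩ := exists_lt_of_csInf_lt (nonempty_qset h1) hx
    exact hs.trans (cdfOf_mono hsx.le)
  have ht : Tendsto (cdfOf ν) (𝓝[>] (qtl (cdfOf ν) u)) (𝓝 (cdfOf ν (qtl (cdfOf ν) u))) :=
    (cdfOf_rc _).mono_left (nhdsWithin_mono _ Ioi_subset_Ici_self)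
  exact ge_of_tendsto ht (eventually_nhdsWithin_of_forall fun x hx => key x hx)

lemma qtl_le_of_le_cdfOf (h0 : 0 < u) (hx : u ≤ cdfOf ν x) : qtl (cdfOf ν) u ≤ x :=
  csInf_le (bddBelow_qset h0) hx

lemma cdfOf_lt_of_lt_qtl (h0 : 0 < u) (hx : x < qtl (cdfOf ν) u) : cdfOf ν x < u := by
  by_contra h
  push_neg at h
  exact absurd (qtl_le_of_le_cdfOf h0 h) (not_le.2 hx)

lemma qtl_le_iff (h0 : 0 < u) (h1 : u < 1) : qtl (cdfOf ν) u ≤ x ↔ u ≤ cdfOf ν x := by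
  constructor
  · intro h
    exact (le_cdfOf_qtl h0 h1).trans (cdfOf_mono h)
  · exact qtl_le_of_le_cdfOf h0

lemma qtl_mono (h0 : 0 < u) (huv : u ≤ v) (h1 : v < 1) :
    qtl (cdfOf ν) u ≤ qtl (cdfOf ν) v :=
  qtl_le_of_le_cdfOf h0 (huv.trans (le_cdfOf_qtl (h0.trans_le huv) h1))

/-! ### A measurable version of the quantile function -/

noncomputable def qext (F : ℝ → ℝ) : ℝ → ℝ := fun u => if u ∈ Ioo (0:ℝ) 1 then qtl F u else 0

lemma qext_preimage (ν : Measure ℝ) [IsProbabilityMeasure ν] (t : ℝ) :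
    qext (cdfOf ν) ⁻¹' Iic t =
      (Ioo 0 1 ∩ Iic (cdfOf ν t)) ∪ ((Ioo (0:ℝ) 1)ᶜ ∩ {u : ℝ | (0:ℝ) ≤ t}) := by
  ext u
  by_cases hu : u ∈ Ioo (0:ℝ) 1
  · simp only [mem_preimage, mem_Iic, qext, if_pos hu, mem_union, mem_inter_iff, hu,
      mem_compl_iff, not_true_eq_false, false_and, or_false, true_and, mem_setOf_eq]
    exact qtl_le_iff hu.1 hu.2
  · simp [qext, if_neg hu, hu]

lemma measurable_qext : Measurable (qext (cdfOf ν)) := by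
  apply measurable_of_Iic
  intro t
  rw [qext_preimage]
  exact ((measurableSet_Ioo.inter measurableSet_Iic).union
    (measurableSet_Ioo.compl.inter (MeasurableSet.const _)))

lemma map_qext : Measure.map (qext (cdfOf ν)) (volume.restrict (Ioo (0:ℝ) 1)) = ν := by
  have hm : Measurable (qext (cdfOf ν)) := measurable_qext
  haveI : IsProbabilityMeasure (volume.restrict (Ioo (0:ℝ) 1)) :=
    ⟨by simp [Real.volume_Ioo]⟩
  haveI : IsProbabilityMeasure (Measure.map (qext (cdfOf ν)) (volume.restrict (Ioo (0:ℝ) 1))) :=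
    Measure.isProbabilityMeasure_map hm.aemeasurable
  refine Measure.ext_of_Iic (Measure.map (qext (cdfOf ν)) (volume.restrict (Ioo (0:ℝ) 1))) ν
    fun t => ?_
  rw [Measure.map_apply hm measurableSet_Iic, qext_preimage,
    Measure.restrict_apply ((measurableSet_Ioo.inter measurableSet_Iic).union
      (measurableSet_Ioo.compl.inter (MeasurableSet.const _)))]
  have hset : ((Ioo 0 1 ∩ Iic (cdfOf ν t)) ∪ ((Ioo (0:ℝ) 1)ᶜ ∩ {u : ℝ | (0:ℝ) ≤ t}))
      ∩ Ioo 0 1 = Ioo 0 1 ∩ Iic (cdfOf ν t) := by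
    ext u
    simp only [mem_inter_iff, mem_union, mem_compl_iff, mem_setOf_eq]
    tauto
  rw [hset, ← ofReal_cdfOf (ν := ν) t]
  rcases lt_or_ge (cdfOf ν t) 1 with h | h
  · have : Ioo (0:ℝ) 1 ∩ Iic (cdfOf ν t) = Ioc 0 (cdfOf ν t) := by
      ext u
      simp only [mem_inter_iff, mem_Ioo, mem_Iic, mem_Ioc]
      constructor
      · rintro ⟨⟨h1, _⟩, h3⟩; exact ⟨h1, h3⟩
      · rintro ⟨h1, h2⟩; exact ⟨⟨h1, h2.trans_lt h⟩, h2⟩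
    rw [this, Real.volume_Ioc, sub_zero]
  · have h1 : cdfOf ν t = 1 := le_antisymm (cdfOf_le_one t) h
    have : Ioo (0:ℝ) 1 ∩ Iic (cdfOf ν t) = Ioo 0 1 := by
      rw [h1]
      exact inter_eq_self_of_subset_left (fun u hu => le_of_lt hu.2)
    rw [this, Real.volume_Ioo, h1]
    norm_num

lemma integral_qtl {f : ℝ → ℝ} (hf : Measurable f) :
    ∫ u in Ioo (0:ℝ) 1, f (qtl (cdfOf ν) u) = ∫ x, f x ∂ν := by
  have h1 : ∫ x, f x ∂ν = ∫ u in Ioo (0:ℝ) 1, f (qext (cdfOf ν) u) := by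
    conv_lhs => rw [← map_qext (ν := ν)]
    exact integral_map measurable_qext.aemeasurable hf.aestronglyMeasurable
  rw [h1]
  exact setIntegral_congr_fun measurableSet_Ioo fun u hu => by rw [qext, if_pos hu]

lemma integrableOn_qtl {f : ℝ → ℝ} (hf : Measurable f) (h : Integrable f ν) :
    IntegrableOn (fun u => f (qtl (cdfOf ν) u)) (Ioo (0:ℝ) 1) volume := by
  have h1 : Integrable (fun u => f (qext (cdfOf ν) u)) (volume.restrict (Ioo (0:ℝ) 1)) := by
    have h2 : Integrable f (Measure.map (qext (cdfOf ν)) (volume.restrict (Ioo (0:ℝ) 1))) := by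
      rw [map_qext]; exact h
    exact (integrable_map_measure hf.aestronglyMeasurable
      measurable_qext.aemeasurable).1 h2
  refine h1.congr ?_
  filter_upwards [ae_restrict_mem measurableSet_Ioo] with u hu
  rw [qext, if_pos hu]

/-! ### Quantile convergence from cdf convergence -/

lemma eventually_qtl_gt {νn : ℕ → Measure ℝ} [∀ n, IsProbabilityMeasure (νn n)]
    (hconv : ∀ r : ℚ, Tendsto (fun n => cdfOf (νn n) (r:ℝ)) atTop (𝓝 (cdfOf ν (r:ℝ))))
    (h0 : 0 < u) (h1 : u < 1) {ε : ℝ} (hε : 0 < ε) :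
    ∀ᶠ n in atTop, qtl (cdfOf ν) u - ε < qtl (cdfOf (νn n)) u := by
  obtain ⟨r, hr1, hr2⟩ := exists_rat_btwn (sub_lt_self (qtl (cdfOf ν) u) hε)
  have hFr : cdfOf ν r < u := cdfOf_lt_of_lt_qtl h0 hr2
  filter_upwards [(hconv r).eventually_lt_const hFr] with n hn
  refine hr1.trans_le (le_csInf (nonempty_qset h1) fun s hs => ?_)
  by_contra h
  push_neg at h
  exact absurd (hs.trans (cdfOf_mono (le_of_lt h))) (not_le.2 hn)

lemma tendsto_qtl {νn : ℕ → Measure ℝ} [∀ n, IsProbabilityMeasure (νn n)]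
    (hconv : ∀ r : ℚ, Tendsto (fun n => cdfOf (νn n) (r:ℝ)) atTop (𝓝 (cdfOf ν (r:ℝ))))
    (h0 : 0 < u) (h1 : u < 1)
    (hrc : ∀ ε > 0, ∃ v, u < v ∧ v < 1 ∧ qtl (cdfOf ν) v < qtl (cdfOf ν) u + ε) :
    Tendsto (fun n => qtl (cdfOf (νn n)) u) atTop (𝓝 (qtl (cdfOf ν) u)) := by
  refine tendsto_order.2 ⟨fun b hb => ?_, fun b hb => ?_⟩
  · have := eventually_qtl_gt (ν := ν) hconv h0 h1 (sub_pos.2 hb)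
    filter_upwards [this] with n hn
    calc b = qtl (cdfOf ν) u - (qtl (cdfOf ν) u - b) := by ring
    _ < qtl (cdfOf (νn n)) u := hn
  · obtain ⟨v, huv, hv1, hqv⟩ := hrc (b - qtl (cdfOf ν) u) (sub_pos.2 hb)
    obtain ⟨r, hr1, hr2⟩ := exists_rat_btwn (show qtl (cdfOf ν) v < b by linarith)
    have hFr : u < cdfOf ν r := by
      obtain ⟨s, hs, hsr⟩ := exists_lt_of_csInf_lt (nonempty_qset hv1) hr1
      exact lt_of_lt_of_le huv (hs.trans (cdfOf_mono hsr.le))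
    filter_upwards [(hconv r).eventually_const_lt hFr] with n hn
    exact lt_of_le_of_lt (qtl_le_of_le_cdfOf h0 hn.le) hr2

/-- Almost every point of `(0,1)` is a "right-continuity point" of the quantile function. -/
lemma ae_rc (ν : Measure ℝ) [IsProbabilityMeasure ν] :
    ∀ᵐ u ∂(volume.restrict (Ioo (0:ℝ) 1)),
      ∀ ε > 0, ∃ v, u < v ∧ v < 1 ∧ qtl (cdfOf ν) v < qtl (cdfOf ν) u + ε := by
  set Q : ℕ → ℝ → ℝ := fun k u =>
    qtl (cdfOf ν) (min (max u (1/(k+2:ℝ))) (1 - 1/(k+2:ℝ))) with hQ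
  have hk0 : ∀ k : ℕ, (0:ℝ) < 1/(k+2:ℝ) := fun k => by positivity
  have hk2 : ∀ k : ℕ, (1:ℝ)/(k+2:ℝ) ≤ 1/2 := by
    intro k
    apply one_div_le_one_div_of_le
    · norm_num
    · have : (0:ℝ) ≤ (k:ℝ) := Nat.cast_nonneg k
      linarith
  have hmonoQ : ∀ k : ℕ, Monotone (Q k) := by
    intro k a b hab
    have h2 := hk0 k
    have h3 := hk2 k
    apply qtl_mono
    · exact lt_min (h2.trans_le (le_max_right _ _)) (by linarith)
    · exact min_le_min (max_le_max hab le_rfl) le_rfl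
    · exact lt_of_le_of_lt (min_le_right _ _) (by linarith)
  set bad : Set ℝ := ⋃ k : ℕ, {u | ¬ContinuousAt (Q k) u} with hbad
  have hbadc : bad.Countable :=
    countable_iUnion fun k => (hmonoQ k).countable_not_continuousAt
  have hbad0 : ∀ᵐ u ∂(volume : Measure ℝ), u ∉ bad :=
    measure_eq_zero_iff_ae_notMem.1 (hbadc.measure_zero volume)
  filter_upwards [ae_restrict_mem measurableSet_Ioo, ae_restrict_of_ae hbad0] with u hu hnb
  intro ε hε
  obtain ⟨m, hm⟩ := exists_nat_one_div_lt (show (0:ℝ) < min u (1-u) by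
    rcases hu with ⟨h1, h2⟩; exact lt_min h1 (by linarith))
  have hmu : 1/(m+2:ℝ) < min u (1-u) := by
    refine lt_of_lt_of_le ?_ hm.le
    apply one_div_lt_one_div_of_lt
    · positivity
    · norm_num
  have hau : 1/(m+2:ℝ) < u := hmu.trans_le (min_le_left _ _)
  have hbu : u < 1 - 1/(m+2:ℝ) := by
    have := hmu.trans_le (min_le_right _ _); linarith
  have hcont : ContinuousAt (Q m) u := by
    by_contra h
    exact hnb (mem_iUnion.2 ⟨m, h⟩)
  rw [Metric.continuousAt_iff] at hcont
  obtain ⟨δ, hδ, hcd⟩ := hcont ε hε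
  set v : ℝ := min (u + δ/2) ((u + (1 - 1/(m+2:ℝ)))/2) with hv
  have hv1 : u < v := by
    apply lt_min (by linarith)
    linarith
  have hv2 : v < 1 - 1/(m+2:ℝ) := by
    apply lt_of_le_of_lt (min_le_right _ _)
    linarith
  have hv3 : v < 1 := by
    have := hk0 m; linarith
  have hdist : dist v u < δ := by
    rw [Real.dist_eq, abs_of_pos (by linarith : (0:ℝ) < v - u)]
    have : v ≤ u + δ/2 := min_le_left _ _
    linarith
  have hQv : Q m v = qtl (cdfOf ν) v := by
    show qtl (cdfOf ν) (min (max v (1/(m+2:ℝ))) (1 - 1/(m+2:ℝ))) = qtl (cdfOf ν) v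
    rw [max_eq_left (by linarith : 1/(m+2:ℝ) ≤ v), min_eq_left hv2.le]
  have hQu : Q m u = qtl (cdfOf ν) u := by
    show qtl (cdfOf ν) (min (max u (1/(m+2:ℝ))) (1 - 1/(m+2:ℝ))) = qtl (cdfOf ν) u
    rw [max_eq_left hau.le, min_eq_left hbu.le]
  refine ⟨v, hv1, hv3, ?_⟩
  have := hcd hdist
  rw [Real.dist_eq] at this
  have h2 := abs_lt.1 this
  rw [hQv, hQu] at h2
  linarith [h2.1, h2.2]

/-! ### The deterministic main lemma -/

lemma main_det (μ : Measure ℝ) [IsProbabilityMeasure μ] {p : ℝ}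
    (hp0 : 0 < p) (hp1 : p < 1)
    (hμint : Integrable (fun x => max (x - qtl (cdfOf μ) p) 0) μ)
    (νn : ℕ → Measure ℝ) [∀ n, IsProbabilityMeasure (νn n)]
    (hconv : ∀ r : ℚ, Tendsto (fun n => cdfOf (νn n) (r:ℝ)) atTop (𝓝 (cdfOf μ (r:ℝ))))
    (hintn : ∀ n, Integrable (fun x => max (x - qtl (cdfOf μ) p) 0) (νn n))
    (hpos : Tendsto (fun n => ∫ x, max (x - qtl (cdfOf μ) p) 0 ∂(νn n)) atTop
      (𝓝 (∫ x, max (x - qtl (cdfOf μ) p) 0 ∂μ))) :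
    Tendsto (fun n => ∫ u in p..1, qtl (cdfOf (νn n)) u) atTop
      (𝓝 (∫ u in p..1, qtl (cdfOf μ) u)) := by
  set c := qtl (cdfOf μ) p with hc
  set φ : ℝ → ℝ := fun x => max (x - c) 0 with hφ
  have hφm : Measurable φ := (measurable_id.sub_const c).max measurable_const
  set g : ℝ → ℝ := fun u => φ (qtl (cdfOf μ) u) with hg
  set gn : ℕ → ℝ → ℝ := fun n u => φ (qtl (cdfOf (νn n)) u) with hgn
  have hsub : Ioo p 1 ⊆ Ioo (0:ℝ) 1 := Ioo_subset_Ioo hp0.le le_rfl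
  haveI hfin : IsFiniteMeasure (volume.restrict (Ioo p 1)) :=
    ⟨by rw [Measure.restrict_apply_univ, Real.volume_Ioo]; exact ENNReal.ofReal_lt_top⟩
  -- a.e. pointwise convergence of quantiles on (0,1)
  have haeconv : ∀ᵐ u ∂(volume.restrict (Ioo (0:ℝ) 1)),
      Tendsto (fun n => qtl (cdfOf (νn n)) u) atTop (𝓝 (qtl (cdfOf μ) u)) := by
    filter_upwards [ae_rc μ, ae_restrict_mem measurableSet_Ioo] with u hrc hu
    exact tendsto_qtl hconv hu.1 hu.2 hrc
  have haeg : ∀ᵐ u ∂(volume.restrict (Ioo (0:ℝ) 1)),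
      Tendsto (fun n => gn n u) atTop (𝓝 (g u)) := by
    filter_upwards [haeconv] with u hu
    exact (hu.sub_const c).max tendsto_const_nhds
  -- integral identities
  have hgint : ∀ n, ∫ u in Ioo (0:ℝ) 1, gn n u = ∫ x, φ x ∂(νn n) := fun n => integral_qtl hφm
  have hgintμ : ∫ u in Ioo (0:ℝ) 1, g u = ∫ x, φ x ∂μ := integral_qtl hφm
  have hgInt : ∀ n, IntegrableOn (gn n) (Ioo (0:ℝ) 1) volume :=
    fun n => integrableOn_qtl hφm (hintn n)
  have hgIntμ : IntegrableOn g (Ioo (0:ℝ) 1) volume := integrableOn_qtl hφm hμint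
  -- Scheffé: L¹ convergence on (0,1)
  have habs : ∀ a b : ℝ, |a - b| = a + b - 2 * min a b := by
    intro a b
    rcases le_total a b with h | h
    · rw [abs_of_nonpos (by linarith), min_eq_left h]; ring
    · rw [abs_of_nonneg (by linarith), min_eq_right h]; ring
  have hminInt : ∀ n, Integrable (fun u => min (gn n u) (g u))
      (volume.restrict (Ioo (0:ℝ) 1)) := by
    intro n
    refine Integrable.mono' ((hgInt n).abs.add hgIntμ.abs) ((hgInt n).1.inf hgIntμ.1) ?_
    refine Eventually.of_forall fun u => ?_
    simp only [Pi.add_apply, Real.norm_eq_abs]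
    rcases le_total (gn n u) (g u) with h | h
    · rw [min_eq_left h]; linarith [abs_nonneg (g u)]
    · rw [min_eq_right h]; linarith [abs_nonneg (gn n u)]
  have hDCT : Tendsto (fun n => ∫ u in Ioo (0:ℝ) 1, min (gn n u) (g u)) atTop
      (𝓝 (∫ u in Ioo (0:ℝ) 1, g u)) := by
    refine tendsto_integral_of_dominated_convergence (fun u => |g u|)
      (fun n => (hminInt n).1) hgIntμ.abs ?_ ?_
    · intro n
      refine Eventually.of_forall fun u => ?_
      rw [Real.norm_eq_abs, abs_le]
      constructor
      · have h1 : 0 ≤ gn n u := le_max_right _ _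
        have h2 : -|g u| ≤ g u := neg_abs_le _
        rcases le_total (gn n u) (g u) with h | h
        · rw [min_eq_left h]; linarith [abs_nonneg (g u)]
        · rw [min_eq_right h]; linarith
      · exact (min_le_right _ _).trans (le_abs_self _)
    · filter_upwards [haeg] with u hu
      simpa [min_self] using hu.min (tendsto_const_nhds : Tendsto (fun _ : ℕ => g u) atTop (𝓝 (g u)))
  have hgtend : Tendsto (fun n => ∫ u in Ioo (0:ℝ) 1, gn n u) atTop
      (𝓝 (∫ u in Ioo (0:ℝ) 1, g u)) := by
    rw [hgintμ]
    exact hpos.congr fun n => (hgint n).symm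
  have hL1 : Tendsto (fun n => ∫ u in Ioo (0:ℝ) 1, |gn n u - g u|) atTop (𝓝 0) := by
    have hkey : ∀ n, ∫ u in Ioo (0:ℝ) 1, |gn n u - g u|
        = (∫ u in Ioo (0:ℝ) 1, gn n u) + (∫ u in Ioo (0:ℝ) 1, g u)
          - 2 * ∫ u in Ioo (0:ℝ) 1, min (gn n u) (g u) := by
      intro n
      have e1 : ∫ u in Ioo (0:ℝ) 1, |gn n u - g u|
          = ∫ u in Ioo (0:ℝ) 1, (gn n u + g u - 2 * min (gn n u) (g u)) :=
        integral_congr_ae (Eventually.of_forall fun u => habs _ _)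
      have hadd : Integrable (fun u => gn n u + g u) (volume.restrict (Ioo (0:ℝ) 1)) :=
        (hgInt n).add hgIntμ
      have hmul : Integrable (fun u => 2 * min (gn n u) (g u))
          (volume.restrict (Ioo (0:ℝ) 1)) := (hminInt n).const_mul 2
      rw [e1, integral_sub hadd hmul, integral_add (hgInt n) hgIntμ, integral_const_mul]
    have := ((hgtend.add (tendsto_const_nhds
      (x := ∫ u in Ioo (0:ℝ) 1, g u))).sub (hDCT.const_mul 2))
    simp only [hkey]
    convert this using 2
    ring
  -- convergence of the positive-part integrals on (p,1)
  have hA : Tendsto (fun n => ∫ u in Ioo p 1, gn n u) atTop (𝓝 (∫ u in Ioo p 1, g u)) := by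
    have hbound : ∀ n, |(∫ u in Ioo p 1, gn n u) - ∫ u in Ioo p 1, g u|
        ≤ ∫ u in Ioo (0:ℝ) 1, |gn n u - g u| := by
      intro n
      have h1 : IntegrableOn (gn n) (Ioo p 1) volume := (hgInt n).mono_set hsub
      have h2 : IntegrableOn g (Ioo p 1) volume := hgIntμ.mono_set hsub
      rw [← integral_sub h1 h2]
      calc |∫ u in Ioo p 1, (gn n u - g u)| ≤ ∫ u in Ioo p 1, |gn n u - g u| := by
            simpa [Real.norm_eq_abs] using
              norm_integral_le_integral_norm (μ := volume.restrict (Ioo p 1))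
                (f := fun u => gn n u - g u)
        _ ≤ ∫ u in Ioo (0:ℝ) 1, |gn n u - g u| := by
            refine setIntegral_mono_set (Integrable.abs ((hgInt n).sub hgIntμ))
              (Eventually.of_forall fun u => abs_nonneg _) (HasSubset.Subset.eventuallyLE hsub)
    have h0 : Tendsto (fun n => (∫ u in Ioo p 1, gn n u) - ∫ u in Ioo p 1, g u) atTop (𝓝 0) :=
      squeeze_zero_norm (fun n => by simpa [Real.norm_eq_abs] using hbound n) hL1
    have := h0.add (tendsto_const_nhds (x := ∫ u in Ioo p 1, g u))
    simpa using this
  -- the negative parts tend to zero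
  set hn : ℕ → ℝ → ℝ := fun n u => max (c - qtl (cdfOf (νn n)) u) 0 with hhn
  have hBn : Tendsto (fun n => max (c - qtl (cdfOf (νn n)) p) 0) atTop (𝓝 0) := by
    refine tendsto_order.2 ⟨fun b hb => Eventually.of_forall fun n =>
      lt_of_lt_of_le hb (le_max_right _ _), fun b hb => ?_⟩
    filter_upwards [eventually_qtl_gt (ν := μ) hconv hp0 hp1 hb] with n hn'
    rw [← hc] at hn'
    exact max_lt (by linarith) hb
  have hnbound : ∀ n, ∀ u ∈ Ioo p 1, ‖hn n u‖ ≤ max (c - qtl (cdfOf (νn n)) p) 0 := by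
    intro n u hu
    rw [Real.norm_eq_abs, abs_of_nonneg (le_max_right _ _)]
    have : qtl (cdfOf (νn n)) p ≤ qtl (cdfOf (νn n)) u := qtl_mono hp0 hu.1.le hu.2
    exact max_le_max (by linarith) le_rfl
  have hB : Tendsto (fun n => ∫ u in Ioo p 1, hn n u) atTop (𝓝 0) := by
    refine squeeze_zero_norm (fun n => ?_) (by simpa using hBn.mul_const (1 - p))
    calc ‖∫ u in Ioo p 1, hn n u‖
        ≤ (max (c - qtl (cdfOf (νn n)) p) 0) * (volume (Ioo p 1)).toReal :=
          norm_setIntegral_le_of_norm_le_const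
            (by rw [Real.volume_Ioo]; exact ENNReal.ofReal_lt_top)
            (hnbound n)
      _ = (max (c - qtl (cdfOf (νn n)) p) 0) * (1 - p) := by
          rw [Real.volume_Ioo, ENNReal.toReal_ofReal (by linarith)]
  -- integrability of the negative parts
  have hnInt : ∀ n, IntegrableOn (hn n) (Ioo p 1) volume := by
    intro n
    have hq : AEStronglyMeasurable (fun u => qtl (cdfOf (νn n)) u)
        (volume.restrict (Ioo p 1)) := by
      refine ((measurable_qext (ν := νn n)).aestronglyMeasurable).congr ?_
      filter_upwards [ae_restrict_mem measurableSet_Ioo] with u hu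
      rw [qext, if_pos (hsub hu)]
    have hm1 : AEStronglyMeasurable (hn n) (volume.restrict (Ioo p 1)) := by
      have : AEMeasurable (fun u => qtl (cdfOf (νn n)) u) (volume.restrict (Ioo p 1)) :=
        hq.aemeasurable
      exact ((aemeasurable_const.sub this).max aemeasurable_const).aestronglyMeasurable
    refine Integrable.mono' (integrable_const (max (c - qtl (cdfOf (νn n)) p) 0)) hm1 ?_
    filter_upwards [ae_restrict_mem measurableSet_Ioo] with u hu
    exact hnbound n u hu
  -- decomposition identities
  have hconst : ∫ u in Ioo p 1, (c : ℝ) = (1 - p) * c := by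
    rw [setIntegral_const, measureReal_def, Real.volume_Ioo, ENNReal.toReal_ofReal (by linarith), smul_eq_mul]
  have hxid : ∀ x : ℝ, x = c + (max (x - c) 0 - max (c - x) 0) := by
    intro x
    have : c - x = -(x - c) := by ring
    rw [this, max_zero_sub_max_neg_zero_eq_self]
    ring
  have hidn : ∀ n, ∫ u in p..1, qtl (cdfOf (νn n)) u
      = (1 - p) * c + ((∫ u in Ioo p 1, gn n u) - ∫ u in Ioo p 1, hn n u) := by
    intro n
    rw [intervalIntegral.integral_of_le hp1.le, integral_Ioc_eq_integral_Ioo]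
    have : ∫ u in Ioo p 1, qtl (cdfOf (νn n)) u
        = ∫ u in Ioo p 1, (c + (gn n u - hn n u)) := by
      refine setIntegral_congr_fun measurableSet_Ioo fun u _ => ?_
      exact hxid _
    have h1 : IntegrableOn (gn n) (Ioo p 1) volume := (hgInt n).mono_set hsub
    have h2 : Integrable (fun u => gn n u - hn n u) (volume.restrict (Ioo p 1)) :=
      h1.sub (hnInt n)
    rw [this, integral_add (integrable_const c) h2, integral_sub h1 (hnInt n), hconst]
  have hidμ : ∫ u in p..1, qtl (cdfOf μ) u = (1 - p) * c + ∫ u in Ioo p 1, g u := by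
    rw [intervalIntegral.integral_of_le hp1.le, integral_Ioc_eq_integral_Ioo]
    have : ∫ u in Ioo p 1, qtl (cdfOf μ) u = ∫ u in Ioo p 1, (c + g u) := by
      refine setIntegral_congr_fun measurableSet_Ioo fun u hu => ?_
      have hcle : c ≤ qtl (cdfOf μ) u := qtl_mono hp0 hu.1.le hu.2
      rw [hg, hφ]
      simp only
      rw [max_eq_left (by linarith)]
      ring
    have h1 : IntegrableOn g (Ioo p 1) volume := hgIntμ.mono_set hsub
    rw [this, integral_add (integrable_const c) h1, hconst]
  -- conclusion
  rw [hidμ]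
  have := (tendsto_const_nhds (x := (1 - p) * c)).add (hA.sub hB)
  rw [sub_zero] at this
  exact Tendsto.congr (fun n => (hidn n).symm) this

/-! ### The empirical measure -/

noncomputable def empMeas {Ω : Type*} [MeasurableSpace Ω] (X : ℕ → Ω → ℝ) (n : ℕ) (ω : Ω) :
    Measure ℝ :=
  ((n : ℝ≥0∞))⁻¹ • ∑ i ∈ Finset.range n, Measure.dirac (X i ω)

lemma empMeas_prob {Ω : Type*} [MeasurableSpace Ω] (X : ℕ → Ω → ℝ) {n : ℕ} (hn : n ≠ 0) (ω : Ω) :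
    IsProbabilityMeasure (empMeas X n ω) := by
  constructor
  rw [empMeas, Measure.smul_apply, Measure.finset_sum_apply]
  simp only [measure_univ, Finset.sum_const, Finset.card_range, nsmul_eq_mul, mul_one,
    smul_eq_mul]
  rw [ENNReal.inv_mul_cancel (by exact_mod_cast hn) (ENNReal.natCast_ne_top n)]

lemma cdfOf_empMeas {Ω : Type*} [MeasurableSpace Ω] (X : ℕ → Ω → ℝ) {n : ℕ} (hn : n ≠ 0)
    (ω : Ω) : cdfOf (empMeas X n ω) = empCdf X n ω := by
  funext t
  rw [cdfOf, empMeas, Measure.smul_apply, Measure.finset_sum_apply]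
  have hd : ∀ i ∈ Finset.range n, Measure.dirac (X i ω) (Iic t)
      = (if X i ω ≤ t then (1:ℝ≥0∞) else 0) := by
    intro i _
    rw [Measure.dirac_apply' _ measurableSet_Iic, Set.indicator_apply]
    simp [mem_Iic]
  rw [Finset.sum_congr rfl hd, smul_eq_mul, ENNReal.toReal_mul, ENNReal.toReal_sum
    (fun i _ => by split <;> simp)]
  have : ∀ i ∈ Finset.range n, ((if X i ω ≤ t then (1:ℝ≥0∞) else 0)).toReal
      = if X i ω ≤ t then (1:ℝ) else 0 := by
    intro i _; split <;> simp
  rw [Finset.sum_congr rfl this, empCdf, div_eq_inv_mul]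
  congr 1
  rw [ENNReal.toReal_inv]
  simp

lemma integral_empMeas {Ω : Type*} [MeasurableSpace Ω] (X : ℕ → Ω → ℝ) (n : ℕ) (ω : Ω)
    {f : ℝ → ℝ} (hf : Measurable f) :
    ∫ x, f x ∂(empMeas X n ω) = (∑ i ∈ Finset.range n, f (X i ω)) / n := by
  rw [empMeas, integral_smul_measure, integral_finset_sum_measure
    (fun i _ => (integrable_const (f (X i ω))).congr (ae_eq_dirac' hf).symm)]
  have hd : ∀ i ∈ Finset.range n, ∫ x, f x ∂(Measure.dirac (X i ω)) = f (X i ω) :=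
    fun i _ => integral_dirac f (X i ω)
  rw [Finset.sum_congr rfl hd, smul_eq_mul, ENNReal.toReal_inv, ENNReal.toReal_natCast,
    div_eq_inv_mul]

lemma integrable_empMeas {Ω : Type*} [MeasurableSpace Ω] (X : ℕ → Ω → ℝ) {n : ℕ} (hn : n ≠ 0)
    (ω : Ω) {f : ℝ → ℝ} (hf : Measurable f) : Integrable f (empMeas X n ω) := by
  rw [empMeas]
  refine Integrable.smul_measure ?_ (ENNReal.inv_ne_top.2 (by exact_mod_cast hn))
  refine (integrable_finset_sum_measure).2 fun i _ => ?_
  exact (integrable_const (f (X i ω))).congr (ae_eq_dirac' hf).symm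

end Stmt14

/-- for `p ∈ (0,1)`, a cdf `F ∈ F₁⁺` continuous at `x_p := F⁻¹(p)`,
and the empirical cdf `F_n` of independent random variables `X_1, …, X_n`, each with
cdf `F`, `∫_p^1 F_n⁻¹(u) du` converges in probability to `∫_p^1 F⁻¹(u) du`
as `n → ∞`. -/
theorem stmt14 {Ω : Type*} [MeasurableSpace Ω] (P : Measure Ω) [IsProbabilityMeasure P]
    (μ : Measure ℝ) [IsProbabilityMeasure μ]
    (hμ : Integrable (fun x => max x 0) μ)
    (p : ℝ) (hp : p ∈ Ioo (0 : ℝ) 1)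
    (hcont : ContinuousAt (cdfOf μ) (qtl (cdfOf μ) p))
    (X : ℕ → Ω → ℝ) (hmeas : ∀ i, Measurable (X i))
    (hindep : iIndepFun X P)
    (hdist : ∀ i, Measure.map (X i) P = μ) :
    TendstoInMeasure P (fun n ω => ∫ u in p..1, qtl (empCdf X n ω) u) atTop
      (fun _ => ∫ u in p..1, qtl (cdfOf μ) u) := by
  clear hcont
  obtain ⟨hp0, hp1⟩ := hp
  set c := qtl (cdfOf μ) p with hc
  have hφm : Measurable (fun x : ℝ => max (x - c) 0) :=
    (measurable_id.sub_const c).max measurable_const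
  have hμc : Integrable (fun x : ℝ => max (x - c) 0) μ := by
    refine (hμ.add (integrable_const |c|)).mono' hφm.aestronglyMeasurable ?_
    refine Eventually.of_forall fun x => ?_
    rw [Real.norm_eq_abs, abs_of_nonneg (le_max_right _ _), Pi.add_apply]
    apply max_le
    · have h1 : x ≤ max x 0 := le_max_left _ _
      have h2 : -c ≤ |c| := neg_le_abs c
      linarith
    · have h1 : 0 ≤ max x 0 := le_max_right _ _
      have h2 : 0 ≤ |c| := abs_nonneg c
      linarith
  have hident : ∀ i, IdentDistrib (X i) (X 0) P P := fun i =>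
    ⟨(hmeas i).aemeasurable, (hmeas 0).aemeasurable, by rw [hdist i, hdist 0]⟩
  -- a general strong law of large numbers for functions of the `X i`
  have hSLLN : ∀ f : ℝ → ℝ, Measurable f → Integrable f μ →
      ∀ᵐ ω ∂P, Tendsto (fun n => (∑ i ∈ Finset.range n, f (X i ω)) / n) atTop
        (𝓝 (∫ x, f x ∂μ)) := by
    intro f hf hfint
    have hint : Integrable (fun ω => f (X 0 ω)) P := by
      have h2 : Integrable f (Measure.map (X 0) P) := by rw [hdist 0]; exact hfint
      exact (integrable_map_measure hf.aestronglyMeasurable (hmeas 0).aemeasurable).1 h2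
    have hE : ∫ ω, f (X 0 ω) ∂P = ∫ x, f x ∂μ := by
      rw [← hdist 0, integral_map (hmeas 0).aemeasurable hf.aestronglyMeasurable]
    have hl := strong_law_ae (μ := P) (fun i => f ∘ X i) hint
      (fun i j hij => (hindep.indepFun hij).comp hf hf)
      (fun i => (hident i).comp hf)
    filter_upwards [hl] with ω hω
    have hω' : Tendsto (fun n : ℕ => (n:ℝ)⁻¹ • ∑ i ∈ Finset.range n, f (X i ω)) atTop
        (𝓝 (∫ ω', f (X 0 ω') ∂P)) := hω
    rw [hE] at hω'
    refine hω'.congr fun n => ?_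
    rw [smul_eq_mul, div_eq_inv_mul]
  -- SLLN for the indicators: pointwise convergence of the empirical cdf at rationals
  have hSLLN1 : ∀ r : ℚ, ∀ᵐ ω ∂P,
      Tendsto (fun n => empCdf X n ω (r:ℝ)) atTop (𝓝 (cdfOf μ (r:ℝ))) := by
    intro r
    have hind : Measurable fun x : ℝ => if x ≤ (r:ℝ) then (1:ℝ) else 0 :=
      Measurable.ite measurableSet_Iic measurable_const measurable_const
    have hintf : Integrable (fun x : ℝ => if x ≤ (r:ℝ) then (1:ℝ) else 0) μ := by
      refine (integrable_const (1:ℝ)).mono' hind.aestronglyMeasurable ?_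
      refine Eventually.of_forall fun x => ?_
      rw [Real.norm_eq_abs]
      split <;> simp
    have hE : ∫ x, (if x ≤ (r:ℝ) then (1:ℝ) else 0) ∂μ = cdfOf μ (r:ℝ) := by
      have heq : (fun x : ℝ => if x ≤ (r:ℝ) then (1:ℝ) else 0)
          = (Iic (r:ℝ)).indicator (fun _ => (1:ℝ)) := by
        funext x; rw [Set.indicator_apply]; simp [mem_Iic]
      rw [heq, integral_indicator_const _ measurableSet_Iic, smul_eq_mul, mul_one, cdfOf, measureReal_def]
    filter_upwards [hSLLN _ hind hintf] with ω hω
    rw [hE] at hω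
    exact hω.congr fun n => by rw [empCdf]
  have hSLLN2 := hSLLN _ hφm hμc
  -- almost sure convergence of the integrals
  have hae : ∀ᵐ ω ∂P, Tendsto (fun n => ∫ u in p..1, qtl (empCdf X n ω) u) atTop
      (𝓝 (∫ u in p..1, qtl (cdfOf μ) u)) := by
    filter_upwards [ae_all_iff.2 hSLLN1, hSLLN2] with ω h1 h2
    set νn : ℕ → Measure ℝ := fun n => if n = 0 then μ else Stmt14.empMeas X n ω with hνn
    haveI hpr : ∀ n, IsProbabilityMeasure (νn n) := by
      intro n
      by_cases h : n = 0
      · simp only [hνn]; rw [if_pos h]; infer_instance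
      · simp only [hνn]; rw [if_neg h]; exact Stmt14.empMeas_prob X h ω
    have hcdfeq : ∀ᶠ n in atTop, ∀ t : ℝ, cdfOf (νn n) t = empCdf X n ω t := by
      filter_upwards [eventually_ne_atTop 0] with n hn
      intro t
      simp only [hνn]; rw [if_neg hn, Stmt14.cdfOf_empMeas X hn ω]
    have hconv : ∀ r : ℚ, Tendsto (fun n => cdfOf (νn n) (r:ℝ)) atTop (𝓝 (cdfOf μ (r:ℝ))) := by
      intro r
      refine (h1 r).congr' ?_
      filter_upwards [hcdfeq] with n hn
      exact (hn (r:ℝ)).symm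
    have hintn : ∀ n, Integrable (fun x => max (x - c) 0) (νn n) := by
      intro n
      by_cases h : n = 0
      · simp only [hνn]; rw [if_pos h]; exact hμc
      · simp only [hνn]; rw [if_neg h]; exact Stmt14.integrable_empMeas X h ω hφm
    have hposn : Tendsto (fun n => ∫ x, max (x - c) 0 ∂(νn n)) atTop
        (𝓝 (∫ x, max (x - c) 0 ∂μ)) := by
      refine h2.congr' ?_
      filter_upwards [eventually_ne_atTop 0] with n hn
      simp only [hνn]; rw [if_neg hn, Stmt14.integral_empMeas X n ω hφm]
    have hmain := Stmt14.main_det μ hp0 hp1 hμc νn hconv hintn hposn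
    refine hmain.congr' ?_
    filter_upwards [hcdfeq] with n hn
    have : cdfOf (νn n) = empCdf X n ω := funext hn
    rw [this]
  -- measurability of the integrated empirical quantiles
  have hms : ∀ n, AEStronglyMeasurable (fun ω => ∫ u in p..1, qtl (empCdf X n ω) u) P := by
    intro n
    rcases eq_or_ne n 0 with hn | hn
    · subst hn
      have h0 : ∀ ω : Ω, empCdf X 0 ω = fun _ => (0:ℝ) := fun ω => funext fun t => by
        simp [empCdf]
      have heq : (fun ω : Ω => ∫ u in p..1, qtl (empCdf X 0 ω) u)
          = fun _ => ∫ u in p..1, qtl (fun _ => (0:ℝ)) u := by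
        funext ω; rw [h0 ω]
      rw [heq]
      exact aestronglyMeasurable_const
    · haveI hprn : ∀ ω : Ω, IsProbabilityMeasure (Stmt14.empMeas X n ω) :=
        fun ω => Stmt14.empMeas_prob X hn ω
      set E : Ω × ℝ → ℝ :=
        fun z => if z.2 ∈ Ioo (0:ℝ) 1 then qtl (empCdf X n z.1) z.2 else 0 with hE
      have hcdfm : ∀ t : ℝ, Measurable (fun ω => empCdf X n ω t) := by
        intro t
        simp only [empCdf]
        apply Measurable.div_const
        apply Finset.measurable_sum
        intro i _
        exact Measurable.ite ((hmeas i) measurableSet_Iic) measurable_const measurable_const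
      have hEm : Measurable E := by
        apply measurable_of_Iic
        intro t
        have hset : E ⁻¹' Iic t
            = ({z : Ω × ℝ | z.2 ∈ Ioo (0:ℝ) 1} ∩ {z : Ω × ℝ | z.2 ≤ empCdf X n z.1 t})
              ∪ ({z : Ω × ℝ | z.2 ∈ Ioo (0:ℝ) 1}ᶜ ∩ {z : Ω × ℝ | (0:ℝ) ≤ t}) := by
          ext z
          by_cases hz : z.2 ∈ Ioo (0:ℝ) 1
          · simp only [mem_preimage, mem_Iic, hE, if_pos hz, mem_union, mem_inter_iff,
              mem_setOf_eq, hz, mem_compl_iff, not_true_eq_false, false_and, or_false,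
              true_and]
            rw [← Stmt14.cdfOf_empMeas X hn z.1]
            exact Stmt14.qtl_le_iff hz.1 hz.2
          · simp only [mem_preimage, mem_Iic, hE, mem_union, mem_inter_iff, mem_setOf_eq,
              mem_compl_iff, if_neg hz, hz]
            tauto
        rw [hset]
        refine MeasurableSet.union ?_ ?_
        · exact (measurable_snd measurableSet_Ioo).inter
            (measurableSet_le measurable_snd ((hcdfm t).comp measurable_fst))
        · exact ((measurable_snd measurableSet_Ioo).compl).inter (MeasurableSet.const _)
      have hrepr : (fun ω => ∫ u in p..1, qtl (empCdf X n ω) u)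
          = fun ω => ∫ u in Ioo p 1, E (ω, u) := by
        funext ω
        rw [intervalIntegral.integral_of_le hp1.le, integral_Ioc_eq_integral_Ioo]
        refine setIntegral_congr_fun measurableSet_Ioo fun u hu => ?_
        simp only [hE]
        rw [if_pos (show u ∈ Ioo (0:ℝ) 1 from ⟨hp0.trans hu.1, hu.2⟩)]
      rw [hrepr]
      exact (hEm.stronglyMeasurable.integral_prod_right').aestronglyMeasurable
  exact tendstoInMeasure_of_tendsto_ae hms hae
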